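/- Let λ ∈ ℂ with λ ≠ 0 and λ ≠ 1, and let r ≥ 1 be an integer. Then B_m^{(r)}(λ) = 0 for every integer 0 ≤ m < r, and for every integer n ≥ 0, B_{n+r}^{(r)}(λ) = ((n + r)!/n!)·(λ − 1)^{−r}·H_n^{(r)}(λ⁻¹). -/

import Mathlib

/-- let `λ ∈ ℂ`, `λ ≠ 0`, `λ ≠ 1`, and `r ≥ 1`. If `B n = B_n^{(r)}(λ)` are the
λ-Bernoulli numbers of order `r`, defined by the formal power series identity
`t^r = (λ·e^t - 1)^r · ∑_{n≥0} B_n^{(r)}(λ)·t^n/n!`, and `H n = H_n^{(r)}(λ⁻¹)` are the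
Frobenius–Euler numbers of order `r` at `u = λ⁻¹`, defined by
`(1 - u)^r = (e^t - u)^r · ∑_{n≥0} H_n^{(r)}(u)·t^n/n!`, then `B_m^{(r)}(λ) = 0` for `m < r`
and `B_{n+r}^{(r)}(λ) = ((n + r)!/n!)·(λ - 1)^{-r}·H_n^{(r)}(λ⁻¹)` for all `n ≥ 0`. -/
theorem lambdaBernoulli_order_r_eq_frobeniusEuler_order_r (lam : ℂ) (h0 : lam ≠ 0)
    (h1 : lam ≠ 1) (r : ℕ) (hr : 1 ≤ r) (B H : ℕ → ℂ)
    (hB : (PowerSeries.X : PowerSeries ℂ) ^ r =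
      (PowerSeries.C lam * PowerSeries.exp ℂ - 1) ^ r *
        PowerSeries.mk (fun n => B n / (n.factorial : ℂ)))
    (hH : (PowerSeries.C (1 - lam⁻¹)) ^ r =
      (PowerSeries.exp ℂ - PowerSeries.C lam⁻¹) ^ r *
        PowerSeries.mk (fun n => H n / (n.factorial : ℂ))) :
    (∀ m : ℕ, m < r → B m = 0) ∧
    ∀ n : ℕ, B (n + r) =
      (((n + r).factorial : ℂ) / (n.factorial : ℂ)) * ((lam - 1) ^ r)⁻¹ * H n := by
  have hlam1 : lam - 1 ≠ 0 := sub_ne_zero.mpr h1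
  have hfac : (PowerSeries.C lam * PowerSeries.exp ℂ - 1)
      = PowerSeries.C lam * (PowerSeries.exp ℂ - PowerSeries.C lam⁻¹) := by
    rw [mul_sub, ← map_mul, mul_inv_cancel₀ h0, map_one]
  have hconst : lam * (1 - lam⁻¹) = lam - 1 := by field_simp
  have key : PowerSeries.C ((lam - 1) ^ r) * PowerSeries.mk (fun n => B n / (n.factorial : ℂ))
      = PowerSeries.X ^ r * PowerSeries.mk (fun n => H n / (n.factorial : ℂ)) := by
    calc PowerSeries.C ((lam - 1) ^ r) * PowerSeries.mk (fun n => B n / (n.factorial : ℂ))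
        = (PowerSeries.C lam) ^ r * (PowerSeries.C (1 - lam⁻¹)) ^ r *
            PowerSeries.mk (fun n => B n / (n.factorial : ℂ)) := by
          rw [← map_pow, ← map_pow, ← map_mul, ← mul_pow, hconst]
      _ = (PowerSeries.C lam) ^ r * ((PowerSeries.exp ℂ - PowerSeries.C lam⁻¹) ^ r *
            PowerSeries.mk (fun n => H n / (n.factorial : ℂ))) *
            PowerSeries.mk (fun n => B n / (n.factorial : ℂ)) := by rw [← hH]
      _ = ((PowerSeries.C lam * (PowerSeries.exp ℂ - PowerSeries.C lam⁻¹)) ^ r *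
            PowerSeries.mk (fun n => B n / (n.factorial : ℂ))) *
            PowerSeries.mk (fun n => H n / (n.factorial : ℂ)) := by rw [mul_pow]; ring
      _ = PowerSeries.X ^ r * PowerSeries.mk (fun n => H n / (n.factorial : ℂ)) := by
          rw [← hfac, ← hB]
  constructor
  · intro m hm
    have := congrArg (PowerSeries.coeff m) key
    rw [PowerSeries.coeff_C_mul, PowerSeries.coeff_mk,
      PowerSeries.coeff_X_pow_mul', if_neg (by omega)] at this
    have hf : ((m.factorial : ℂ)) ≠ 0 := Nat.cast_ne_zero.mpr m.factorial_ne_zero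
    have hp : (lam - 1) ^ r ≠ 0 := pow_ne_zero _ hlam1
    field_simp at this
    exact (mul_eq_zero.mp (by simpa using this)).resolve_left hp
  · intro n
    have := congrArg (PowerSeries.coeff (n + r)) key
    rw [PowerSeries.coeff_C_mul, PowerSeries.coeff_mk,
      PowerSeries.coeff_X_pow_mul, PowerSeries.coeff_mk] at this
    have hf1 : (((n + r).factorial : ℂ)) ≠ 0 := Nat.cast_ne_zero.mpr (n + r).factorial_ne_zero
    have hf2 : ((n.factorial : ℂ)) ≠ 0 := Nat.cast_ne_zero.mpr n.factorial_ne_zero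
    have hp : (lam - 1) ^ r ≠ 0 := pow_ne_zero _ hlam1
    field_simp at this ⊢
    linear_combination this
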